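/- Every sequential Thiele rule other than approval voting fails participation: if s is a Thiele scoring function for which there exists x ≥ 1 with s(x+1) - s(x) < s(x) - s(x-1), then for the sequential Thiele rule f induced by s there exist a candidate set C, a committee size k, an approval profile A, and a voter i ∈ N_A with f(A_{-i},k) ≻_i f(A,k). -/

import Mathlib

/-- An approval profile is a multiset of approval ballots (anonymous encoding):
each ballot is a nonempty subset of the candidates, and the electorate is nonempty. -/
def validProfile {C : Type*} [DecidableEq C] (A : Multiset (Finset C)) : Prop :=
  A ≠ 0 ∧ ∀ b ∈ A, b ≠ (∅ : Finset C)

/-- Kelly's extension, weak preference. -/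
def KellyWeak {C : Type*} [DecidableEq C] (b : Finset C) (X Y : Set (Finset C)) : Prop :=
  ∀ W ∈ X, ∀ W' ∈ Y, (W' ∩ b).card ≤ (W ∩ b).card

/-- Kelly's extension, strict preference. -/
def KellyStrict {C : Type*} [DecidableEq C] (b : Finset C) (X Y : Set (Finset C)) : Prop :=
  KellyWeak b X Y ∧ ∃ W ∈ X, ∃ W' ∈ Y, (W' ∩ b).card < (W ∩ b).card

/-- The Thiele score `ŝ(A,W) = Σ_{i ∈ N_A} s(|A_i ∩ W|)` of a committee `W`. -/
def thieleScore {C : Type*} [DecidableEq C] (s : ℕ → ℚ) (A : Multiset (Finset C))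
    (W : Finset C) : ℚ :=
  (A.map fun b => s (b ∩ W).card).sum

/-- `seqThieleValid s A P L`: the sequence `L` is a valid continuation of the partial
committee `P` for the sequential Thiele rule induced by `s`: each entry maximizes the
Thiele score of the extended partial committee. -/
def seqThieleValid {C : Type*} [DecidableEq C] (s : ℕ → ℚ) (A : Multiset (Finset C)) :
    Finset C → List C → Prop
  | _, [] => True
  | P, c :: rest =>
      c ∉ P ∧
      (∀ x : C, x ∉ P → thieleScore s A (insert x P) ≤ thieleScore s A (insert c P)) ∧
      seqThieleValid s A (insert c P) rest

/-- The sequential Thiele rule induced by the scoring function `s`. -/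
def seqThiele {C : Type*} [DecidableEq C] (s : ℕ → ℚ) (A : Multiset (Finset C))
    (k : ℕ) : Set (Finset C) :=
  {W | ∃ L : List C, L.toFinset = W ∧ L.length = k ∧ seqThieleValid s A ∅ L}

/- ======================================================================== -/
/- Auxiliary development for the counterexample.                            -/
/- ======================================================================== -/

namespace STC
open Multiset Finset

/-! ### The candidate set

Candidates are `Fin (y+4)`: the first `y` candidates are "fillers" approved by
every voter, and the last four form the interesting gadget, embedded via `ι`:
`0 ↦ e`, `1 ↦ w`, `2 ↦ a`, `3 ↦ d`. -/

def ι (y : ℕ) : Fin 4 ↪ Fin (y+4) :=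
  ⟨fun j => ⟨y + j.val, by omega⟩, by
    intro a b h; simp only [Fin.mk.injEq] at h; exact Fin.ext (by omega)⟩

def U (y : ℕ) : Finset (Fin (y+4)) :=
  (Finset.range y).attachFin (fun m hm => by simp at hm; omega)

lemma mem_U {y : ℕ} {v : Fin (y+4)} : v ∈ U y ↔ v.val < y := by
  simp [U, Finset.mem_attachFin]

lemma card_U (y : ℕ) : (U y).card = y := by simp [U, Finset.card_attachFin]

/-- a ballot/committee consisting of all fillers together with gadget part `T` -/
def bal (y : ℕ) (T : Finset (Fin 4)) : Finset (Fin (y+4)) := U y ∪ T.map (ι y)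

lemma U_subset_bal (y : ℕ) (T : Finset (Fin 4)) : U y ⊆ bal y T :=
  Finset.subset_union_left

lemma bal_empty (y : ℕ) : bal y ∅ = U y := by simp [bal]

lemma mem_map_iota {y : ℕ} {T : Finset (Fin 4)} {v : Fin (y+4)}
    (h : v ∈ T.map (ι y)) : y ≤ v.val := by
  simp only [Finset.mem_map] at h
  obtain ⟨a, _, rfl⟩ := h
  exact Nat.le_add_right _ _

lemma bal_inter (y : ℕ) (T S : Finset (Fin 4)) : bal y T ∩ bal y S = bal y (T ∩ S) := by
  unfold bal
  rw [Finset.map_inter, ← Finset.union_inter_distrib_left]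

lemma disj_U_map (y : ℕ) (T : Finset (Fin 4)) : Disjoint (U y) (T.map (ι y)) := by
  rw [Finset.disjoint_left]
  intro a ha hb
  have := mem_map_iota hb
  rw [mem_U] at ha
  omega

lemma card_bal (y : ℕ) (T : Finset (Fin 4)) : (bal y T).card = y + T.card := by
  rw [bal, Finset.card_union_of_disjoint (disj_U_map y T), card_U, Finset.card_map]

lemma card_bal_inter (y : ℕ) (T S : Finset (Fin 4)) :
    (bal y T ∩ bal y S).card = y + (T ∩ S).card := by
  rw [bal_inter, card_bal]

lemma insert_bal {y : ℕ} (z : Fin 4) (S : Finset (Fin 4)) :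
    insert (ι y z) (bal y S) = bal y (insert z S) := by
  rw [bal, bal, Finset.map_insert, Finset.union_insert]

lemma iota_not_mem_bal {y : ℕ} {z : Fin 4} {S : Finset (Fin 4)} (h : z ∉ S) :
    ι y z ∉ bal y S := by
  intro hmem
  rcases Finset.mem_union.mp hmem with h1 | h2
  · rw [mem_U] at h1; change y + z.val < y at h1; omega
  · rw [Finset.mem_map] at h2
    obtain ⟨a, ha, hae⟩ := h2
    exact h ((ι y).injective hae ▸ ha)

lemma not_mem_bal {y : ℕ} {x : Fin (y+4)} {S : Finset (Fin 4)} (h : x ∉ bal y S) :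
    ∃ z₀ : Fin 4, z₀ ∉ S ∧ ι y z₀ = x := by
  have hU : ¬ x.val < y := fun hx => h (Finset.mem_union_left _ (mem_U.mpr hx))
  have hz : ι y (⟨x.val - y, by omega⟩ : Fin 4) = x := Fin.ext (by show y + (x.val - y) = x.val; omega)
  exact ⟨_, fun hmem => h (hz ▸ Finset.mem_union_right _ (Finset.mem_map_of_mem _ hmem)), hz⟩

/-! ### Generic facts about valid sequences -/

variable {C : Type*} [DecidableEq C]

/-- From a partial committee `P ⊆ U`, any enumeration of the rest of `U` is a valid
continuation (followed by any valid continuation from `U`), provided every ballot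
contains `U` and `s` is monotone. -/
lemma valid_fill {s : ℕ → ℚ} (hms : Monotone s) {U : Finset C} (A : Multiset (Finset C))
    (hU : ∀ B ∈ A, U ⊆ B) (l : List C) :
    ∀ (P : Finset C), P ⊆ U → P ∪ l.toFinset = U →
      l.Nodup → (∀ v ∈ l, v ∉ P) → ∀ L₀ : List C, seqThieleValid s A U L₀ →
      seqThieleValid s A P (l ++ L₀) := by
  induction l with
  | nil =>
    intro P hP hcover _ _ L₀ hL₀
    simp only [List.toFinset_nil, Finset.union_empty] at hcover
    subst hcover; simpa using hL₀
  | cons u l ih =>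
    intro P hP hcover hnd hdisj L₀ hL₀
    have huU : u ∈ U := by rw [← hcover]; exact Finset.mem_union_right _ (by simp)
    have huP : u ∉ P := hdisj u (by simp)
    obtain ⟨hul, hndl⟩ := List.nodup_cons.mp hnd
    refine ⟨huP, ?_, ?_⟩
    · intro x hx
      simp only [thieleScore]
      refine Multiset.sum_map_le_sum_map _ _ ?_
      intro B hB
      apply hms
      have h1 : insert u P ⊆ B :=
        (Finset.insert_subset_iff.mpr ⟨huU, hP⟩).trans (hU B hB)
      calc (B ∩ insert x P).card ≤ (insert x P).card :=
            Finset.card_le_card Finset.inter_subset_right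
        _ = P.card + 1 := Finset.card_insert_of_notMem hx
        _ = (insert u P).card := (Finset.card_insert_of_notMem huP).symm
        _ = (B ∩ insert u P).card := by rw [Finset.inter_eq_right.mpr h1]
    · have hcov2 : insert u P ∪ l.toFinset = U := by
        rw [Finset.insert_union, ← Finset.union_insert, ← List.toFinset_cons]
        exact hcover
      refine ih (insert u P) (Finset.insert_subset_iff.mpr ⟨huU, hP⟩) hcov2 hndl ?_ L₀ hL₀
      intro v hv
      simp only [Finset.mem_insert]
      push_neg
      exact ⟨fun h => hul (h ▸ hv), hdisj v (List.mem_cons_of_mem _ hv)⟩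

/-- In a valid sequence from `P ⊊ U`, if every ballot contains `U`, `s` is monotone
and strictly increasing at `P.card`, then the chosen candidate must lie in `U`
(otherwise, a remaining member of `U` would have strictly larger score). -/
lemma filler_forced {s : ℕ → ℚ} (hms : Monotone s) {U : Finset C}
    (A : Multiset (Finset C)) (hU : ∀ B ∈ A, U ⊆ B)
    {P : Finset C} (hP : P ⊆ U) (hlt : P.card < U.card)
    (hstep : s P.card < s (P.card + 1))
    {z : C} (hz : z ∉ P)
    (hmax : ∀ x ∉ P, thieleScore s A (insert x P) ≤ thieleScore s A (insert z P))
    (hwit : z ∉ U → ∃ B ∈ A, z ∉ B) : z ∈ U := by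
  by_contra hzU
  obtain ⟨B₀, hB₀, hzB₀⟩ := hwit hzU
  obtain ⟨A₂, rfl⟩ := Multiset.exists_cons_of_mem hB₀
  have hne : (U \ P).Nonempty := by
    rw [← Finset.card_pos, Finset.card_sdiff_of_subset hP]; omega
  obtain ⟨u, hu⟩ := hne
  rw [Finset.mem_sdiff] at hu
  have key : thieleScore s (B₀ ::ₘ A₂) (insert z P) <
      thieleScore s (B₀ ::ₘ A₂) (insert u P) := by
    simp only [thieleScore, Multiset.map_cons, Multiset.sum_cons]
    have hPB : ∀ B ∈ B₀ ::ₘ A₂, P ⊆ B := fun B hB => hP.trans (hU B hB)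
    apply add_lt_add_of_lt_of_le
    · have e1 : (B₀ ∩ insert z P).card = P.card := by
        rw [Finset.inter_insert_of_notMem hzB₀,
          Finset.inter_eq_right.mpr (hPB B₀ (Multiset.mem_cons_self _ _))]
      have e2 : (B₀ ∩ insert u P).card = P.card + 1 := by
        rw [Finset.inter_eq_right.mpr
          ((Finset.insert_subset_iff.mpr ⟨hu.1, hP⟩).trans
            (hU B₀ (Multiset.mem_cons_self _ _)))]
        exact Finset.card_insert_of_notMem hu.2
      rw [e1, e2]; exact hstep
    · refine Multiset.sum_map_le_sum_map _ _ ?_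
      intro B hB
      apply hms
      have h1 : insert u P ⊆ B := (Finset.insert_subset_iff.mpr ⟨hu.1, hP⟩).trans
        (hU B (Multiset.mem_cons_of_mem hB))
      calc (B ∩ insert z P).card ≤ (insert z P).card :=
            Finset.card_le_card Finset.inter_subset_right
        _ = P.card + 1 := Finset.card_insert_of_notMem hz
        _ = (insert u P).card := (Finset.card_insert_of_notMem hu.2).symm
        _ = (B ∩ insert u P).card := by rw [Finset.inter_eq_right.mpr h1]
  exact absurd (hmax u hu.2) (not_le.mpr key)

/-! ### The two profiles -/

/-- the profile without voter i -/
def prof (y c : ℕ) : Multiset (Finset (Fin (y+4))) :=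
  Multiset.replicate (c+1) (bal y {0,2}) + Multiset.replicate (c+1) (bal y {0}) +
  Multiset.replicate 1 (bal y {0,1}) + Multiset.replicate (2*c+3) (bal y {1}) +
  Multiset.replicate (c+2) (bal y {2,3}) + Multiset.replicate c (bal y {3})

/-- the profile with voter i (whose ballot is `bal y {0,2}`) -/
def profi (y c : ℕ) : Multiset (Finset (Fin (y+4))) := bal y {0,2} ::ₘ prof y c

lemma prof_ballots {y c : ℕ} {B : Finset (Fin (y+4))} (h : B ∈ prof y c) :
    B = bal y {0,2} ∨ B = bal y {0} ∨ B = bal y {0,1} ∨ B = bal y {1} ∨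
      B = bal y {2,3} ∨ B = bal y {3} := by
  simp only [prof, Multiset.mem_add, Multiset.mem_replicate] at h
  tauto

lemma profi_ballots {y c : ℕ} {B : Finset (Fin (y+4))} (h : B ∈ profi y c) :
    B = bal y {0,2} ∨ B = bal y {0} ∨ B = bal y {0,1} ∨ B = bal y {1} ∨
      B = bal y {2,3} ∨ B = bal y {3} := by
  rcases Multiset.mem_cons.mp h with h | h
  · exact Or.inl h
  · exact prof_ballots h

lemma U_sub_prof {y c : ℕ} : ∀ B ∈ prof y c, U y ⊆ B := by
  intro B h
  rcases prof_ballots h with rfl | rfl | rfl | rfl | rfl | rfl <;> exact U_subset_bal _ _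

lemma U_sub_profi {y c : ℕ} : ∀ B ∈ profi y c, U y ⊆ B := by
  intro B h
  rcases profi_ballots h with rfl | rfl | rfl | rfl | rfl | rfl <;> exact U_subset_bal _ _

lemma bal_one_mem_prof {y c : ℕ} : bal y {1} ∈ prof y c := by
  simp [prof, Multiset.mem_replicate]

lemma bal_zero_mem_prof {y c : ℕ} : bal y {0} ∈ prof y c := by
  simp [prof, Multiset.mem_replicate]

lemma bal_one_mem_profi {y c : ℕ} : bal y {1} ∈ profi y c :=
  Multiset.mem_cons_of_mem bal_one_mem_prof

lemma bal_zero_mem_profi {y c : ℕ} : bal y {0} ∈ profi y c :=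
  Multiset.mem_cons_of_mem bal_zero_mem_prof

/-- a ballot missing any given non-filler candidate -/
lemma witness_prof {y c : ℕ} {z : Fin (y+4)} (hzU : z ∉ U y) :
    ∃ B ∈ prof y c, z ∉ B := by
  have h : z ∉ bal y ∅ := by rwa [bal_empty]
  obtain ⟨z₀, _, rfl⟩ := not_mem_bal h
  fin_cases z₀
  · exact ⟨bal y {1}, bal_one_mem_prof, iota_not_mem_bal (by decide)⟩
  · exact ⟨bal y {0}, bal_zero_mem_prof, iota_not_mem_bal (by decide)⟩
  · exact ⟨bal y {0}, bal_zero_mem_prof, iota_not_mem_bal (by decide)⟩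
  · exact ⟨bal y {0}, bal_zero_mem_prof, iota_not_mem_bal (by decide)⟩

lemma witness_profi {y c : ℕ} {z : Fin (y+4)} (hzU : z ∉ U y) :
    ∃ B ∈ profi y c, z ∉ B := by
  obtain ⟨B, hB, hzB⟩ := witness_prof (c := c) hzU
  exact ⟨B, Multiset.mem_cons_of_mem hB, hzB⟩

/-! ### Score evaluations -/

lemma score_prof (s : ℕ → ℚ) (y c : ℕ) (S : Finset (Fin 4)) :
    thieleScore s (prof y c) (bal y S) =
      (c+1) * s (y + ({0,2} ∩ S).card) + (c+1) * s (y + ({0} ∩ S).card)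
      + s (y + ({0,1} ∩ S).card) + (2*c+3) * s (y + ({1} ∩ S).card)
      + (c+2) * s (y + ({2,3} ∩ S).card) + c * s (y + ({3} ∩ S).card) := by
  simp only [thieleScore, prof, Multiset.map_add, Multiset.sum_add, Multiset.map_replicate,
    Multiset.sum_replicate, card_bal_inter, nsmul_eq_mul]
  push_cast
  ring

lemma score_profi (s : ℕ → ℚ) (y c : ℕ) (S : Finset (Fin 4)) :
    thieleScore s (profi y c) (bal y S) =
      s (y + ({0,2} ∩ S).card) + thieleScore s (prof y c) (bal y S) := by
  simp only [thieleScore, profi, Multiset.map_cons, Multiset.sum_cons, card_bal_inter]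

/-! ### Step lemmas -/

/-- A valid choice at a committee of shape `bal y S` is forced when one gadget
candidate strictly dominates all others. -/
lemma forced_step {s : ℕ → ℚ} {y c' : ℕ} (A : Multiset (Finset (Fin (y+4))))
    (S : Finset (Fin 4)) {w₀ : Fin 4} {z : Fin (y+4)} (hz : z ∉ bal y S)
    (hmax : ∀ x, x ∉ bal y S →
      thieleScore s A (insert x (bal y S)) ≤ thieleScore s A (insert z (bal y S)))
    (hstrict : ∀ z₀ : Fin 4, z₀ ∉ S → z₀ ≠ w₀ →
      thieleScore s A (bal y (insert z₀ S)) < thieleScore s A (bal y (insert w₀ S)))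
    (hw : w₀ ∉ S) : z = ι y w₀ := by
  obtain ⟨z₀, hz₀, rfl⟩ := not_mem_bal hz
  by_contra hne
  have h2 : z₀ ≠ w₀ := fun h => hne (by rw [h])
  have h3 := hmax (ι y w₀) (iota_not_mem_bal hw)
  rw [insert_bal, insert_bal] at h3
  exact absurd h3 (not_le.mpr (hstrict z₀ hz₀ h2))

/-- conversely, weak dominance of a gadget candidate yields a valid step -/
lemma valid_step {s : ℕ → ℚ} {y : ℕ} (A : Multiset (Finset (Fin (y+4))))
    (S : Finset (Fin 4)) (w₀ : Fin 4) (hw : w₀ ∉ S)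
    (hmax : ∀ z₀ : Fin 4, z₀ ∉ S →
      thieleScore s A (bal y (insert z₀ S)) ≤ thieleScore s A (bal y (insert w₀ S))) :
    ι y w₀ ∉ bal y S ∧ ∀ x, x ∉ bal y S →
      thieleScore s A (insert x (bal y S)) ≤ thieleScore s A (insert (ι y w₀) (bal y S)) := by
  refine ⟨iota_not_mem_bal hw, ?_⟩
  intro x hx
  obtain ⟨z₀, hz₀, rfl⟩ := not_mem_bal hx
  rw [insert_bal, insert_bal]
  exact hmax z₀ hz₀

/-! ### Concrete score comparisons -/

section Facts
variable {s : ℕ → ℚ} {y c : ℕ}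

/-- stage `y+1` without voter i: candidate `w` (i.e. `1`) wins strictly -/
lemma F1 (hp0 : s y < s (y+1)) :
    ∀ z₀ : Fin 4, z₀ ∉ (∅ : Finset (Fin 4)) → z₀ ≠ 1 →
      thieleScore s (prof y c) (bal y (insert z₀ ∅)) <
        thieleScore s (prof y c) (bal y (insert 1 ∅)) := by
  intro z₀ hmem hne
  fin_cases z₀
  · rw [score_prof, score_prof]
    simp (config := { decide := true }) [Finset.insert_inter_of_notMem,
      Finset.insert_inter_of_mem, Finset.singleton_inter_of_notMem,
      Finset.singleton_inter_of_mem]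
    linarith
  · simp at hne
  · rw [score_prof, score_prof]
    simp (config := { decide := true }) [Finset.insert_inter_of_notMem,
      Finset.insert_inter_of_mem, Finset.singleton_inter_of_notMem,
      Finset.singleton_inter_of_mem]
    linarith
  · rw [score_prof, score_prof]
    simp (config := { decide := true }) [Finset.insert_inter_of_notMem,
      Finset.insert_inter_of_mem, Finset.singleton_inter_of_notMem,
      Finset.singleton_inter_of_mem]
    linarith

/-- stage `y+2` without voter i: candidate `a` (i.e. `2`) wins strictly -/
lemma F2 (hp0 : s y < s (y+1)) (hpq : s (y+2) - s (y+1) < s (y+1) - s y) :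
    ∀ z₀ : Fin 4, z₀ ∉ (insert 1 ∅ : Finset (Fin 4)) → z₀ ≠ 2 →
      thieleScore s (prof y c) (bal y (insert z₀ (insert 1 ∅))) <
        thieleScore s (prof y c) (bal y (insert 2 (insert 1 ∅))) := by
  intro z₀ hmem hne
  fin_cases z₀
  · rw [score_prof, score_prof]
    simp (config := { decide := true }) [Finset.insert_inter_of_notMem,
      Finset.insert_inter_of_mem, Finset.singleton_inter_of_notMem,
      Finset.singleton_inter_of_mem]
    linarith
  · simp at hmem
  · simp at hne
  · rw [score_prof, score_prof]
    simp (config := { decide := true }) [Finset.insert_inter_of_notMem,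
      Finset.insert_inter_of_mem, Finset.singleton_inter_of_notMem,
      Finset.singleton_inter_of_mem]
    linarith

/-- stage `y+3` without voter i: candidate `e` (i.e. `0`) wins strictly -/
lemma F3 (hp0 : s y < s (y+1)) :
    ∀ z₀ : Fin 4, z₀ ∉ (insert 2 (insert 1 ∅) : Finset (Fin 4)) → z₀ ≠ 0 →
      thieleScore s (prof y c) (bal y (insert z₀ (insert 2 (insert 1 ∅)))) <
        thieleScore s (prof y c) (bal y (insert 0 (insert 2 (insert 1 ∅)))) := by
  intro z₀ hmem hne
  fin_cases z₀
  · simp at hne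
  · simp at hmem
  · simp at hmem
  · rw [score_prof, score_prof]
    simp (config := { decide := true }) [Finset.insert_inter_of_notMem,
      Finset.insert_inter_of_mem, Finset.singleton_inter_of_notMem,
      Finset.singleton_inter_of_mem]
    linarith

/-- stage `y+1` with voter i: candidate `e` (i.e. `0`) is among the winners -/
lemma G1 (hp0 : s y < s (y+1)) :
    ∀ z₀ : Fin 4, z₀ ∉ (∅ : Finset (Fin 4)) →
      thieleScore s (profi y c) (bal y (insert z₀ ∅)) ≤
        thieleScore s (profi y c) (bal y (insert 0 ∅)) := by
  intro z₀ hmem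
  fin_cases z₀ <;>
  · rw [score_profi, score_profi, score_prof, score_prof]
    simp (config := { decide := true }) [Finset.insert_inter_of_notMem,
      Finset.insert_inter_of_mem, Finset.singleton_inter_of_notMem,
      Finset.singleton_inter_of_mem]
    try linarith

/-- stage `y+2` with voter i: candidate `w` (i.e. `1`) is among the winners -/
lemma G2 (hp0 : s y < s (y+1)) (hpq : s (y+2) - s (y+1) < s (y+1) - s y)
    (hq0 : s (y+1) ≤ s (y+2))
    (hc : (c:ℚ)*(s (y+2) - s (y+1)) + 2*(s (y+2) - s (y+1)) ≤ (c:ℚ)*(s (y+1) - s y)) :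
    ∀ z₀ : Fin 4, z₀ ∉ (insert 0 ∅ : Finset (Fin 4)) →
      thieleScore s (profi y c) (bal y (insert z₀ (insert 0 ∅))) ≤
        thieleScore s (profi y c) (bal y (insert 1 (insert 0 ∅))) := by
  have hc0 : (0:ℚ) ≤ (c:ℚ) := Nat.cast_nonneg c
  have hm3 := mul_le_mul_of_nonneg_left hpq.le hc0
  intro z₀ hmem
  fin_cases z₀
  · simp at hmem
  · rw [score_profi, score_profi, score_prof, score_prof]
    simp (config := { decide := true }) [Finset.insert_inter_of_notMem,
      Finset.insert_inter_of_mem, Finset.singleton_inter_of_notMem,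
      Finset.singleton_inter_of_mem]
  · rw [score_profi, score_profi, score_prof, score_prof]
    simp (config := { decide := true }) [Finset.insert_inter_of_notMem,
      Finset.insert_inter_of_mem, Finset.singleton_inter_of_notMem,
      Finset.singleton_inter_of_mem]
    linarith
  · rw [score_profi, score_profi, score_prof, score_prof]
    simp (config := { decide := true }) [Finset.insert_inter_of_notMem,
      Finset.insert_inter_of_mem, Finset.singleton_inter_of_notMem,
      Finset.singleton_inter_of_mem]
    linarith

/-- stage `y+3` with voter i: candidate `d` (i.e. `3`) is among the winners -/
lemma G3 (hp0 : s y < s (y+1)) (hpq : s (y+2) - s (y+1) < s (y+1) - s y)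
    (hq0 : s (y+1) ≤ s (y+2))
    (hc : (c:ℚ)*(s (y+2) - s (y+1)) + 2*(s (y+2) - s (y+1)) ≤ (c:ℚ)*(s (y+1) - s y)) :
    ∀ z₀ : Fin 4, z₀ ∉ (insert 1 (insert 0 ∅) : Finset (Fin 4)) →
      thieleScore s (profi y c) (bal y (insert z₀ (insert 1 (insert 0 ∅)))) ≤
        thieleScore s (profi y c) (bal y (insert 3 (insert 1 (insert 0 ∅)))) := by
  have hc0 : (0:ℚ) ≤ (c:ℚ) := Nat.cast_nonneg c
  have hm3 := mul_le_mul_of_nonneg_left hpq.le hc0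
  intro z₀ hmem
  fin_cases z₀
  · simp at hmem
  · simp at hmem
  · rw [score_profi, score_profi, score_prof, score_prof]
    simp (config := { decide := true }) [Finset.insert_inter_of_notMem,
      Finset.insert_inter_of_mem, Finset.singleton_inter_of_notMem,
      Finset.singleton_inter_of_mem]
    linarith
  · rw [score_profi, score_profi, score_prof, score_prof]
    simp (config := { decide := true }) [Finset.insert_inter_of_notMem,
      Finset.insert_inter_of_mem, Finset.singleton_inter_of_notMem,
      Finset.singleton_inter_of_mem]

end Facts

/-! ### Characterization of valid sequences -/

section Char
variable {s : ℕ → ℚ} {y c : ℕ}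

/-- the final-set identity for the profile without voter i -/
lemma final_set_without (y : ℕ) :
    U y ∪ [ι y 1, ι y 2, ι y 0].toFinset = bal y {0,1,2} := by
  ext v
  simp [bal, Finset.mem_map]
  tauto

/-- Every valid sequence for the profile without voter i, starting from a
partial committee `P ⊆ U` and of total length `y+3`, ends up at `bal y {0,1,2}`. -/
lemma char_without (hms : Monotone s) (hinc : ∀ j : ℕ, j ≤ y → s j < s (j+1))
    (hp0 : s y < s (y+1)) (hpq : s (y+2) - s (y+1) < s (y+1) - s y) :
    ∀ (l : List (Fin (y+4))) (P : Finset (Fin (y+4))), P ⊆ U y →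
      seqThieleValid s (prof y c) P l → l.length + P.card = y + 3 →
      P ∪ l.toFinset = bal y {0,1,2} := by
  intro l
  induction l with
  | nil =>
    intro P hP _ hlen
    exfalso
    have := Finset.card_le_card hP
    rw [card_U] at this
    simp at hlen
    omega
  | cons z l ih =>
    intro P hP hval hlen
    obtain ⟨hzP, hmax, hrest⟩ := hval
    by_cases hcard : P.card < y
    · have hzU : z ∈ U y := filler_forced hms _ U_sub_prof hP (by rw [card_U]; exact hcard)
        (hinc P.card (by omega)) hzP hmax (fun h => witness_prof h)
      have hres := ih (insert z P) (Finset.insert_subset_iff.mpr ⟨hzU, hP⟩) hrest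
        (by rw [Finset.card_insert_of_notMem hzP]; simp only [List.length_cons] at hlen; omega)
      rw [List.toFinset_cons, Finset.union_insert, ← Finset.insert_union]
      exact hres
    · have hcU := Finset.card_le_card hP
      rw [card_U] at hcU
      have hPU : P = U y := Finset.eq_of_subset_of_card_le hP (by rw [card_U]; omega)
      subst hPU
      rw [← bal_empty] at hzP hmax hrest
      have hlen' : l.length = 2 := by
        simp only [List.length_cons, bal_empty, card_U] at hlen ⊢
        omega
      have hz1 : z = ι y 1 := forced_step (c' := c) _ ∅ hzP hmax (F1 hp0) (by decide)
      subst hz1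
      rw [insert_bal] at hrest
      rcases l with _ | ⟨z₂, l⟩
      · simp at hlen'
      obtain ⟨hz₂P, hmax₂, hrest₂⟩ := hrest
      have hz2 : z₂ = ι y 2 :=
        forced_step (c' := c) _ (insert 1 ∅) hz₂P hmax₂ (F2 hp0 hpq) (by decide)
      subst hz2
      rw [insert_bal] at hrest₂
      rcases l with _ | ⟨z₃, l⟩
      · simp at hlen'
      obtain ⟨hz₃P, hmax₃, hrest₃⟩ := hrest₂
      have hz3 : z₃ = ι y 0 :=
        forced_step (c' := c) _ (insert 2 (insert 1 ∅)) hz₃P hmax₃ (F3 hp0) (by decide)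
      subst hz3
      rcases l with _ | ⟨z₄, l⟩
      · exact final_set_without y
      · simp at hlen'

/-- The tail `[w, a, e]` is a valid continuation from `U` for the profile without i. -/
lemma tail_without (hp0 : s y < s (y+1)) (hpq : s (y+2) - s (y+1) < s (y+1) - s y) :
    seqThieleValid s (prof y c) (U y) [ι y 1, ι y 2, ι y 0] := by
  rw [← bal_empty]
  have hmax1 : ∀ z₀ : Fin 4, z₀ ∉ (∅ : Finset (Fin 4)) →
      thieleScore s (prof y c) (bal y (insert z₀ ∅)) ≤
        thieleScore s (prof y c) (bal y (insert 1 ∅)) := by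
    intro z₀ h
    by_cases hz : z₀ = 1
    · subst hz; exact le_rfl
    · exact (F1 hp0 z₀ h hz).le
  have s1 := valid_step (prof y c) ∅ 1 (by decide) hmax1
  refine ⟨s1.1, s1.2, ?_⟩
  rw [insert_bal]
  have hmax2 : ∀ z₀ : Fin 4, z₀ ∉ (insert 1 ∅ : Finset (Fin 4)) →
      thieleScore s (prof y c) (bal y (insert z₀ (insert 1 ∅))) ≤
        thieleScore s (prof y c) (bal y (insert 2 (insert 1 ∅))) := by
    intro z₀ h
    by_cases hz : z₀ = 2
    · subst hz; exact le_rfl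
    · exact (F2 hp0 hpq z₀ h hz).le
  have s2 := valid_step (prof y c) (insert 1 ∅) 2 (by decide) hmax2
  refine ⟨s2.1, s2.2, ?_⟩
  rw [insert_bal]
  have hmax3 : ∀ z₀ : Fin 4, z₀ ∉ (insert 2 (insert 1 ∅) : Finset (Fin 4)) →
      thieleScore s (prof y c) (bal y (insert z₀ (insert 2 (insert 1 ∅)))) ≤
        thieleScore s (prof y c) (bal y (insert 0 (insert 2 (insert 1 ∅)))) := by
    intro z₀ h
    by_cases hz : z₀ = 0
    · subst hz; exact le_rfl
    · exact (F3 hp0 z₀ h hz).le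
  have s3 := valid_step (prof y c) (insert 2 (insert 1 ∅)) 0 (by decide) hmax3
  exact ⟨s3.1, s3.2, trivial⟩

/-- The tail `[e, w, d]` is a valid continuation from `U` for the profile with i. -/
lemma tail_with (hp0 : s y < s (y+1)) (hpq : s (y+2) - s (y+1) < s (y+1) - s y)
    (hq0 : s (y+1) ≤ s (y+2))
    (hc : (c:ℚ)*(s (y+2) - s (y+1)) + 2*(s (y+2) - s (y+1)) ≤ (c:ℚ)*(s (y+1) - s y)) :
    seqThieleValid s (profi y c) (U y) [ι y 0, ι y 1, ι y 3] := by
  rw [← bal_empty]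
  have s1 := valid_step (profi y c) ∅ 0 (by decide) (G1 hp0)
  refine ⟨s1.1, s1.2, ?_⟩
  rw [insert_bal]
  have s2 := valid_step (profi y c) (insert 0 ∅) 1 (by decide) (G2 hp0 hpq hq0 hc)
  refine ⟨s2.1, s2.2, ?_⟩
  rw [insert_bal]
  have s3 := valid_step (profi y c) (insert 1 (insert 0 ∅)) 3 (by decide) (G3 hp0 hpq hq0 hc)
  exact ⟨s3.1, s3.2, trivial⟩

end Char

/-! ### The filler list -/

def lU (y : ℕ) : List (Fin (y+4)) :=
  (List.range y).pmap (fun j h => (⟨j, h⟩ : Fin (y+4))) (fun j hj => by simp at hj; omega)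

lemma lU_length (y : ℕ) : (lU y).length = y := by simp [lU]

lemma lU_mem {y : ℕ} {v : Fin (y+4)} : v ∈ lU y ↔ v.val < y := by
  simp only [lU, List.mem_pmap, List.mem_range]
  constructor
  · rintro ⟨a, ha, rfl⟩; exact ha
  · intro h; exact ⟨v.val, h, Fin.ext rfl⟩

lemma lU_toFinset (y : ℕ) : (lU y).toFinset = U y := by
  ext v; simp [lU_mem, mem_U]

lemma lU_nodup (y : ℕ) : (lU y).Nodup := by
  refine List.Nodup.pmap ?_ List.nodup_range
  intro a ha b hb h
  simpa [Fin.mk.injEq] using h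

/-- a full valid sequence from `∅` built from the fillers and a tail from `U` -/
lemma full_valid {s : ℕ → ℚ} {y : ℕ} (hms : Monotone s)
    (A : Multiset (Finset (Fin (y+4)))) (hU : ∀ B ∈ A, U y ⊆ B)
    (L₀ : List (Fin (y+4))) (hL₀ : seqThieleValid s A (U y) L₀) :
    seqThieleValid s A ∅ (lU y ++ L₀) := by
  refine valid_fill hms A hU (lU y) ∅ (Finset.empty_subset _) ?_ (lU_nodup y) (by simp) L₀ hL₀
  rw [Finset.empty_union, lU_toFinset]

end STC

/-! ### Final set identities for the two witness outcomes -/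

lemma STC.final_set_with (y : ℕ) :
    U y ∪ [ι y 0, ι y 1, ι y 3].toFinset = bal y {0,1,3} := by
  ext v
  simp [bal, Finset.mem_map]
  try tauto

/-- Every sequential Thiele rule other than AV fails participation. -/
theorem seqThiele_nonAV_fails_participation'
    (s : ℕ → ℚ) (h0 : s 0 = 0) (h1 : 0 < s 1)
    (hmono : ∀ x : ℕ, s x ≤ s (x + 1))
    (hconcave : ∀ x : ℕ, s (x + 2) - s (x + 1) ≤ s (x + 1) - s x)
    (hnotAV : ∃ x : ℕ, 1 ≤ x ∧ s (x + 1) - s x < s x - s (x - 1)) :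
    ∃ (m k : ℕ) (A : Multiset (Finset (Fin m))) (b : Finset (Fin m)),
      1 ≤ k ∧ k < m ∧ validProfile A ∧ b ∈ A ∧
      KellyStrict b (seqThiele s (A.erase b) k) (seqThiele s A k) := by
  classical
  obtain ⟨x, hx1, hlt⟩ := hnotAV
  obtain ⟨y, rfl⟩ : ∃ y, x = y + 1 := ⟨x - 1, by omega⟩
  have hpq : s (y+2) - s (y+1) < s (y+1) - s y := by
    have h : y + 1 - 1 = y := by omega
    rw [h] at hlt
    exact hlt
  have hq0 : s (y+1) ≤ s (y+2) := hmono (y+1)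
  have hp0 : s y < s (y+1) := by linarith
  have hms : Monotone s := monotone_nat_of_le_succ hmono
  have hanti : ∀ b a : ℕ, a ≤ b → s (b+1) - s b ≤ s (a+1) - s a := by
    intro b a hab
    induction b, hab using Nat.le_induction with
    | base => exact le_rfl
    | succ n hn ih => exact le_trans (hconcave n) ih
  have hinc : ∀ j : ℕ, j ≤ y → s j < s (j+1) := by
    intro j hj
    have := hanti y j hj
    linarith
  have hd : 0 < (s (y+1) - s y) - (s (y+2) - s (y+1)) := by linarith
  obtain ⟨c, hcge⟩ := exists_nat_ge
    ((2*(s (y+2) - s (y+1))) / ((s (y+1) - s y) - (s (y+2) - s (y+1))))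
  have hc : (c:ℚ)*(s (y+2) - s (y+1)) + 2*(s (y+2) - s (y+1)) ≤ (c:ℚ)*(s (y+1) - s y) := by
    have h2 := (div_le_iff₀ hd).mp hcge
    nlinarith [h2]
  refine ⟨y+4, y+3, STC.profi y c, STC.bal y {0,2}, by omega, by omega, ?_,
    Multiset.mem_cons_self _ _, ?_⟩
  · constructor
    · simp [STC.profi]
    · intro B hB
      have hne : ∀ T : Finset (Fin 4), T.Nonempty → STC.bal y T ≠ ∅ := by
        rintro T ⟨t, ht⟩
        exact Finset.ne_empty_of_mem (Finset.mem_union_right _ (Finset.mem_map_of_mem _ ht))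
      rcases STC.profi_ballots hB with rfl | rfl | rfl | rfl | rfl | rfl
      · exact hne _ ⟨0, by decide⟩
      · exact hne _ ⟨0, by decide⟩
      · exact hne _ ⟨0, by decide⟩
      · exact hne _ ⟨1, by decide⟩
      · exact hne _ ⟨2, by decide⟩
      · exact hne _ ⟨3, by decide⟩
  · have herase : (STC.profi y c).erase (STC.bal y {0,2}) = STC.prof y c :=
      Multiset.erase_cons_head _ _
    rw [herase]
    have hcard12 : (STC.bal y {0,1,2} ∩ STC.bal y {0,2}).card = y + 2 := by
      rw [STC.card_bal_inter]
      have h : (({0,1,2} : Finset (Fin 4)) ∩ {0,2}).card = 2 := by decide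
      omega
    constructor
    · -- weak Kelly preference
      intro W hW W' hW'
      obtain ⟨L, hLF, hLlen, hLval⟩ := hW
      have hWeq : W = STC.bal y {0,1,2} := by
        have hchar := STC.char_without (c := c) hms hinc hp0 hpq L ∅
          (Finset.empty_subset _) hLval (by simp [hLlen])
        rw [← hLF]
        simpa using hchar
      rw [hWeq, hcard12]
      calc (W' ∩ STC.bal y {0,2}).card ≤ (STC.bal y {0,2}).card :=
            Finset.card_le_card Finset.inter_subset_right
        _ = y + 2 := by
            rw [STC.card_bal]
            have h : ({0,2} : Finset (Fin 4)).card = 2 := by decide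
            omega
    · -- a strict pair of outcomes
      refine ⟨STC.bal y {0,1,2}, ?_, STC.bal y {0,1,3}, ?_, ?_⟩
      · refine ⟨STC.lU y ++ [STC.ι y 1, STC.ι y 2, STC.ι y 0], ?_, ?_, ?_⟩
        · rw [List.toFinset_append, STC.lU_toFinset]
          exact STC.final_set_without y
        · simp [STC.lU_length]
        · exact STC.full_valid hms _ STC.U_sub_prof _ (STC.tail_without hp0 hpq)
      · refine ⟨STC.lU y ++ [STC.ι y 0, STC.ι y 1, STC.ι y 3], ?_, ?_, ?_⟩
        · rw [List.toFinset_append, STC.lU_toFinset]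
          exact STC.final_set_with y
        · simp [STC.lU_length]
        · exact STC.full_valid hms _ STC.U_sub_profi _ (STC.tail_with hp0 hpq hq0 hc)
      · rw [hcard12, STC.card_bal_inter]
        have h : (({0,1,3} : Finset (Fin 4)) ∩ {0,2}).card = 1 := by decide
        omega


/-- Every sequential Thiele rule other than AV fails participation: if the Thiele
scoring function `s` (with `s(0) = 0`, `s(1) > 0`, weakly increasing and concave) is
not linear, i.e. `s(x+1) - s(x) < s(x) - s(x-1)` for some `x ≥ 1`, then there are a
candidate set, a committee size, a profile, and a voter who strictly benefits from
abstaining (w.r.t. Kelly's extension). -/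
theorem seqThiele_nonAV_fails_participation
    (s : ℕ → ℚ) (h0 : s 0 = 0) (h1 : 0 < s 1)
    (hmono : ∀ x : ℕ, s x ≤ s (x + 1))
    (hconcave : ∀ x : ℕ, s (x + 2) - s (x + 1) ≤ s (x + 1) - s x)
    (hnotAV : ∃ x : ℕ, 1 ≤ x ∧ s (x + 1) - s x < s x - s (x - 1)) :
    ∃ (m k : ℕ) (A : Multiset (Finset (Fin m))) (b : Finset (Fin m)),
      1 ≤ k ∧ k < m ∧ validProfile A ∧ b ∈ A ∧
      KellyStrict b (seqThiele s (A.erase b) k) (seqThiele s A k) :=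
  seqThiele_nonAV_fails_participation' s h0 h1 hmono hconcave hnotAV
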